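/- For every j ∈ {1, …, aₙ−1} and every k ∈ {0, …, A₁/aₙ − 1}, the Apéry sets satisfy #S_{kaₙ+j} = #S_{kaₙ+1} + (j−1). -/

import Mathlib

/-- A numerical semigroup: an additive submonoid of ℕ with finite complement. -/
def IsNumericalSemigroup (Γ : Set ℕ) : Prop :=
  0 ∈ Γ ∧ (∀ x ∈ Γ, ∀ y ∈ Γ, x + y ∈ Γ) ∧ Γᶜ.Finite

/-- The Apéry set Ap(Γ,x) = {s ∈ Γ : s - x ∉ Γ}. -/
def Ap (Γ : Set ℕ) (x : ℕ) : Set ℕ := {s ∈ Γ | ∀ t ∈ Γ, s ≠ t + x}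

/-- The inductive numerical semigroups Γ₀ = ℕ, Γᵢ = aᵢ·Γ_{i-1} ∪ (aᵢbᵢ + ℕ). -/
def IndSG (a b : ℕ → ℕ) : ℕ → Set ℕ
  | 0 => Set.univ
  | i + 1 => (fun x => a (i + 1) * x) '' IndSG a b i ∪ {x | a (i + 1) * b (i + 1) ≤ x}

lemma mem_Ap' {Γ : Set ℕ} {x s : ℕ} : s ∈ Ap Γ x ↔ s ∈ Γ ∧ ¬(x ≤ s ∧ s - x ∈ Γ) := by
  simp only [Ap, Set.mem_setOf_eq]
  constructor
  · rintro ⟨hs, h⟩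
    refine ⟨hs, ?_⟩
    rintro ⟨hxs, hsx⟩
    exact h _ hsx (by omega)
  · rintro ⟨hs, h⟩
    refine ⟨hs, fun t ht heq => h ⟨by omega, ?_⟩⟩
    have : s - x = t := by omega
    rwa [this]

lemma divmod_eq' {A q1 r1 q2 r2 : ℕ} (h1 : r1 < A) (h2 : r2 < A)
    (h : A*q1+r1 = A*q2+r2) : q1 = q2 ∧ r1 = r2 := by
  have e1 : (A*q1+r1) % A = r1 := by rw [Nat.mul_add_mod, Nat.mod_eq_of_lt h1]
  have e2 : (A*q2+r2) % A = r2 := by rw [Nat.mul_add_mod, Nat.mod_eq_of_lt h2]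
  have hr : r1 = r2 := by rw [← e1, ← e2, h]
  exact ⟨Nat.eq_of_mul_eq_mul_left (by omega) (show A*q1 = A*q2 by omega), hr⟩

lemma mem_G' {a b : ℕ → ℕ} {m y : ℕ} :
    y ∈ IndSG a b (m+1) ↔ (∃ t ∈ IndSG a b m, a (m+1) * t = y) ∨ a (m+1) * b (m+1) ≤ y := by
  simp [IndSG, Set.mem_image]

lemma mul_mem_iff' {a b : ℕ → ℕ} {m : ℕ} (hA : 2 ≤ a (m+1))
    (hup : ∀ t, b (m+1) ≤ t → t ∈ IndSG a b m) {t : ℕ} :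
    a (m+1) * t ∈ IndSG a b (m+1) ↔ t ∈ IndSG a b m := by
  rw [mem_G']
  constructor
  · rintro (⟨u, hu, he⟩ | h)
    · have : u = t := Nat.eq_of_mul_eq_mul_left (by omega) he
      rwa [← this]
    · exact hup t (Nat.le_of_mul_le_mul_left h (by omega))
  · intro ht
    exact Or.inl ⟨t, ht, rfl⟩

lemma nmul_mem_iff' {a b : ℕ → ℕ} {m : ℕ} (hA : 2 ≤ a (m+1)) {q r : ℕ}
    (hr1 : 1 ≤ r) (hr2 : r < a (m+1)) :
    a (m+1) * q + r ∈ IndSG a b (m+1) ↔ b (m+1) ≤ q := by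
  rw [mem_G']
  constructor
  · rintro (⟨u, hu, he⟩ | h)
    · have e1 : (a (m+1) * u) % a (m+1) = 0 := Nat.mul_mod_right _ _
      rw [he] at e1
      have e2 : (a (m+1) * q + r) % a (m+1) = r := by
        rw [Nat.mul_add_mod, Nat.mod_eq_of_lt hr2]
      omega
    · by_contra hq
      have : a (m+1) * q + r < a (m+1) * b (m+1) := by
        calc a (m+1) * q + r < a (m+1) * q + a (m+1) := by omega
          _ = a (m+1) * (q + 1) := by ring
          _ ≤ a (m+1) * b (m+1) := Nat.mul_le_mul_left _ (by omega)
      omega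
  · intro hq
    refine Or.inr ?_
    have : a (m+1) * b (m+1) ≤ a (m+1) * q := Nat.mul_le_mul_left _ hq
    omega

lemma gap_lt' {a b : ℕ → ℕ} {m : ℕ}
    (hup : ∀ t, b (m+1) ≤ t → t ∈ IndSG a b m) {t : ℕ}
    (h : t ∉ IndSG a b m) : t < b (m+1) := by
  by_contra h'
  exact h (hup t (by omega))

open Classical in
lemma ap_formula (a b : ℕ → ℕ) (m j k : ℕ) (hA : 2 ≤ a (m+1))
    (hup : ∀ t, b (m+1) ≤ t → t ∈ IndSG a b m)
    (hB : 1 ≤ b (m+1))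
    (hj1 : 1 ≤ j) (hj2 : j ≤ a (m+1) - 1) (hk : k < b (m+1)) :
    (Ap (IndSG a b (m+1)) (k * a (m+1) + j)).ncard =
      ((Finset.range (b (m+1)+k+1)).filter (· ∈ IndSG a b m)).card
      + ((Finset.Icc (b (m+1)) (b (m+1)+k-1)).filter (fun q => q - k ∉ IndSG a b m)).card
      + k * (a (m+1) - 1 - j) + (k+1) * (j-1) := by
  set A := a (m+1) with hA'
  set B := b (m+1) with hB'
  set S := IndSG a b m with hS'
  set G := IndSG a b (m+1) with hG'
  have hA0 : 0 < A := by omega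
  have hmulkA : k * A = A * k := by ring
  set F1 : Finset ℕ := ((Finset.range (B+k+1)).filter (· ∈ S)).image (fun t => A*t) with hF1
  set F2 : Finset ℕ := ((Finset.Icc B (B+k-1)) ×ˢ (Finset.Icc (j+1) (A-1))).image
      (fun p => A*p.1+p.2) with hF2
  set F3 : Finset ℕ := ((Finset.Icc B (B+k-1)).filter (fun q => q - k ∉ S)).image
      (fun q => A*q+j) with hF3
  set F4 : Finset ℕ := ((Finset.Icc B (B+k)) ×ˢ (Finset.Icc 1 (j-1))).image
      (fun p => A*p.1+p.2) with hF4
  have main : Ap G (k*A+j) = ↑(F1 ∪ F2 ∪ F3 ∪ F4) := by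
    ext s
    rw [mem_Ap']
    simp only [Finset.coe_union, Set.mem_union, Finset.mem_coe, or_assoc]
    constructor
    · rintro ⟨hsG, hnot⟩
      obtain ⟨q0, r0, hr0, rfl⟩ : ∃ q r, r < A ∧ A*q + r = s :=
        ⟨s / A, s % A, Nat.mod_lt _ hA0, Nat.div_add_mod s A⟩
      by_cases hr00 : r0 = 0
      · subst hr00
        rw [add_zero] at hsG hnot ⊢
        have hq0S : q0 ∈ S := (mul_mem_iff' hA hup).1 hsG
        refine Or.inl ?_
        simp only [hF1, Finset.mem_image, Finset.mem_filter, Finset.mem_range]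
        refine ⟨q0, ⟨?_, hq0S⟩, rfl⟩
        by_contra hgt
        push_neg at hgt
        apply hnot
        have h1 : A*(k+1) ≤ A*q0 := Nat.mul_le_mul_left _ (by omega)
        have h2 : A*(k+1) = A*k + A := by ring
        refine ⟨by omega, ?_⟩
        have e1 : A*(q0-k-1) + A*(k+1) = A*q0 := by
          rw [← Nat.mul_add]; congr 1; omega
        have e2 : A*q0 - (k*A+j) = A*(q0-k-1) + (A - j) := by omega
        rw [e2, nmul_mem_iff' hA (by omega) (by omega)]
        omega
      · -- r0 ≥ 1
        have hq0B : B ≤ q0 := (nmul_mem_iff' hA (by omega) hr0).1 hsG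
        have h1 : A*(k+1) ≤ A*q0 := Nat.mul_le_mul_left _ (by omega)
        have h2 : A*(k+1) = A*k + A := by ring
        have hle : k*A+j ≤ A*q0 + r0 := by omega
        have hsx : ¬ (A*q0 + r0 - (k*A+j) ∈ G) := fun h => hnot ⟨hle, h⟩
        have e0 : A*(q0-k) + A*k = A*q0 := by rw [← Nat.mul_add]; congr 1; omega
        rcases lt_trichotomy r0 j with hrj | hrj | hrj
        · -- r0 < j : piece F4
          refine Or.inr (Or.inr (Or.inr ?_))
          have e1 : A*(q0-k-1) + A*(k+1) = A*q0 := by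
            rw [← Nat.mul_add]; congr 1; omega
          have e2 : A*q0 + r0 - (k*A+j) = A*(q0-k-1) + (A + r0 - j) := by omega
          rw [e2, nmul_mem_iff' hA (by omega) (by omega)] at hsx
          simp only [hF4, Finset.mem_image, Finset.mem_product, Finset.mem_Icc]
          exact ⟨(q0, r0), ⟨⟨by omega, by omega⟩, ⟨by omega, by omega⟩⟩, rfl⟩
        · -- r0 = j : piece F3
          subst hrj
          refine Or.inr (Or.inr (Or.inl ?_))
          have e2 : A*q0 + r0 - (k*A+r0) = A*(q0-k) := by omega
          rw [e2, mul_mem_iff' hA hup] at hsx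
          have := gap_lt' hup hsx
          simp only [hF3, Finset.mem_image, Finset.mem_filter, Finset.mem_Icc]
          exact ⟨q0, ⟨⟨by omega, by omega⟩, hsx⟩, rfl⟩
        · -- r0 > j : piece F2
          refine Or.inr (Or.inl ?_)
          have e2 : A*q0 + r0 - (k*A+j) = A*(q0-k) + (r0 - j) := by omega
          rw [e2, nmul_mem_iff' hA (by omega) (by omega)] at hsx
          simp only [hF2, Finset.mem_image, Finset.mem_product, Finset.mem_Icc]
          exact ⟨(q0, r0), ⟨⟨by omega, by omega⟩, ⟨by omega, by omega⟩⟩, rfl⟩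
    · rintro (h | h | h | h)
      · simp only [hF1, Finset.mem_image, Finset.mem_filter, Finset.mem_range] at h
        obtain ⟨t, ⟨htr, htS⟩, rfl⟩ := h
        refine ⟨(mul_mem_iff' hA hup).2 htS, ?_⟩
        rintro ⟨hle, hmem⟩
        have htk : k + 1 ≤ t := by
          by_contra hc
          have : A*t ≤ A*k := Nat.mul_le_mul_left _ (by omega)
          omega
        have e1 : A*(t-k-1) + A*(k+1) = A*t := by rw [← Nat.mul_add]; congr 1; omega
        have h2 : A*(k+1) = A*k + A := by ring
        have e2 : A*t - (k*A+j) = A*(t-k-1) + (A - j) := by omega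
        rw [e2, nmul_mem_iff' hA (by omega) (by omega)] at hmem
        omega
      · simp only [hF2, Finset.mem_image, Finset.mem_product, Finset.mem_Icc] at h
        obtain ⟨⟨q, r⟩, ⟨⟨hq1, hq2⟩, hr1, hr2⟩, rfl⟩ := h
        refine ⟨(nmul_mem_iff' hA (by omega) (by omega)).2 hq1, ?_⟩
        rintro ⟨hle, hmem⟩
        have e0 : A*(q-k) + A*k = A*q := by rw [← Nat.mul_add]; congr 1; omega
        have e2 : A*q + r - (k*A+j) = A*(q-k) + (r - j) := by omega
        rw [e2, nmul_mem_iff' hA (by omega) (by omega)] at hmem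
        omega
      · simp only [hF3, Finset.mem_image, Finset.mem_filter, Finset.mem_Icc] at h
        obtain ⟨q, ⟨⟨hq1, hq2⟩, hqS⟩, rfl⟩ := h
        refine ⟨(nmul_mem_iff' hA (by omega) (by omega)).2 hq1, ?_⟩
        rintro ⟨hle, hmem⟩
        have e0 : A*(q-k) + A*k = A*q := by rw [← Nat.mul_add]; congr 1; omega
        have e2 : A*q + j - (k*A+j) = A*(q-k) := by omega
        rw [e2, mul_mem_iff' hA hup] at hmem
        exact hqS hmem
      · simp only [hF4, Finset.mem_image, Finset.mem_product, Finset.mem_Icc] at h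
        obtain ⟨⟨q, r⟩, ⟨⟨hq1, hq2⟩, hr1, hr2⟩, rfl⟩ := h
        refine ⟨(nmul_mem_iff' hA (by omega) (by omega)).2 hq1, ?_⟩
        rintro ⟨hle, hmem⟩
        have e1 : A*(q-k-1) + A*(k+1) = A*q := by rw [← Nat.mul_add]; congr 1; omega
        have h2 : A*(k+1) = A*k + A := by ring
        have e2 : A*q + r - (k*A+j) = A*(q-k-1) + (A + r - j) := by omega
        rw [e2, nmul_mem_iff' hA (by omega) (by omega)] at hmem
        omega
  rw [main, Set.ncard_coe_finset]
  -- residues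
  have res1 : ∀ s ∈ F1, s % A = 0 := by
    intro s hs
    simp only [hF1, Finset.mem_image] at hs
    obtain ⟨t, _, rfl⟩ := hs
    exact Nat.mul_mod_right _ _
  have resr : ∀ (q r : ℕ), r < A → (A*q+r) % A = r := by
    intro q r hr
    rw [Nat.mul_add_mod, Nat.mod_eq_of_lt hr]
  have res2 : ∀ s ∈ F2, j + 1 ≤ s % A ∧ s % A ≤ A - 1 := by
    intro s hs
    simp only [hF2, Finset.mem_image, Finset.mem_product, Finset.mem_Icc] at hs
    obtain ⟨⟨q, r⟩, ⟨_, hr1, hr2⟩, rfl⟩ := hs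
    rw [resr q r (by omega)]
    omega
  have res3 : ∀ s ∈ F3, s % A = j := by
    intro s hs
    simp only [hF3, Finset.mem_image] at hs
    obtain ⟨q, _, rfl⟩ := hs
    exact resr q j (by omega)
  have res4 : ∀ s ∈ F4, 1 ≤ s % A ∧ s % A ≤ j - 1 := by
    intro s hs
    simp only [hF4, Finset.mem_image, Finset.mem_product, Finset.mem_Icc] at hs
    obtain ⟨⟨q, r⟩, ⟨_, hr1, hr2⟩, rfl⟩ := hs
    rw [resr q r (by omega)]
    omega
  have d1 : Disjoint F1 (F2 ∪ F3 ∪ F4) := by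
    rw [Finset.disjoint_left]
    intro s hs1 hs2
    have := res1 s hs1
    simp only [Finset.mem_union] at hs2
    rcases hs2 with (h | h) | h
    · have := res2 s h; omega
    · have := res3 s h; omega
    · have := res4 s h; omega
  have d2 : Disjoint F2 (F3 ∪ F4) := by
    rw [Finset.disjoint_left]
    intro s hs1 hs2
    have := res2 s hs1
    simp only [Finset.mem_union] at hs2
    rcases hs2 with h | h
    · have := res3 s h; omega
    · have := res4 s h; omega
  have d3 : Disjoint F3 F4 := by
    rw [Finset.disjoint_left]
    intro s hs1 hs2
    have := res3 s hs1
    have := res4 s hs2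
    omega
  rw [show F1 ∪ F2 ∪ F3 ∪ F4 = F1 ∪ (F2 ∪ F3 ∪ F4) by
    simp [Finset.union_assoc]]
  rw [Finset.card_union_of_disjoint d1]
  rw [show F2 ∪ F3 ∪ F4 = F2 ∪ (F3 ∪ F4) by simp [Finset.union_assoc]]
  rw [Finset.card_union_of_disjoint d2, Finset.card_union_of_disjoint d3]
  have c1 : F1.card = ((Finset.range (B+k+1)).filter (· ∈ S)).card :=
    Finset.card_image_of_injective _ (fun x y h => Nat.eq_of_mul_eq_mul_left hA0 h)
  have c3 : F3.card = ((Finset.Icc B (B+k-1)).filter (fun q => q - k ∉ S)).card :=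
    Finset.card_image_of_injective _
      (fun x y h => Nat.eq_of_mul_eq_mul_left hA0 (by omega))
  have c2 : F2.card = k * (A - 1 - j) := by
    rw [hF2, Finset.card_image_of_injOn, Finset.card_product, Nat.card_Icc, Nat.card_Icc]
    · congr 1 <;> omega
    · rintro ⟨q1, r1⟩ hp1 ⟨q2, r2⟩ hp2 h
      simp only [Finset.mem_coe, Finset.mem_product, Finset.mem_Icc] at hp1 hp2
      have := divmod_eq' (show r1 < A by omega) (show r2 < A by omega) h
      simp only [Prod.mk.injEq]
      exact this
  have c4 : F4.card = (k+1) * (j - 1) := by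
    rw [hF4, Finset.card_image_of_injOn, Finset.card_product, Nat.card_Icc, Nat.card_Icc]
    · congr 1 <;> omega
    · rintro ⟨q1, r1⟩ hp1 ⟨q2, r2⟩ hp2 h
      simp only [Finset.mem_coe, Finset.mem_product, Finset.mem_Icc] at hp1 hp2
      have := divmod_eq' (show r1 < A by omega) (show r2 < A by omega) h
      simp only [Prod.mk.injEq]
      exact this
  omega

lemma prod_le_b (n : ℕ) (a b : ℕ → ℕ)
    (hb1 : 1 ≤ b 1)
    (hb : ∀ i, 1 ≤ i → i + 1 ≤ n → a i * b i ≤ b (i + 1)) :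
    ∀ i, 1 ≤ i → i ≤ n → (∏ t ∈ Finset.Icc 1 (i-1), a t) ≤ b i := by
  intro i
  induction i with
  | zero => omega
  | succ i ih =>
    intro _ hin
    rcases Nat.eq_zero_or_pos i with rfl | hi
    · simpa using hb1
    · obtain ⟨i', rfl⟩ : ∃ i', i = i' + 1 := ⟨i - 1, by omega⟩
      have h1 := ih (by omega) (by omega)
      simp only [Nat.add_sub_cancel] at h1 ⊢
      rw [Finset.prod_Icc_succ_top (by omega)]
      calc (∏ t ∈ Finset.Icc 1 i', a t) * a (i'+1)
          ≤ b (i'+1) * a (i'+1) := Nat.mul_le_mul_right _ h1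
        _ = a (i'+1) * b (i'+1) := by ring
        _ ≤ b (i'+1+1) := hb (i'+1) (by omega) (by omega)

/-- `∏ i in Icc 1 (n-1), a i` is `A₁ / aₙ`. -/
theorem stmt2 (n : ℕ) (hn : 1 ≤ n) (a b : ℕ → ℕ)
    (ha : ∀ i, 1 ≤ i → i ≤ n → 2 ≤ a i)
    (hb1 : 1 ≤ b 1)
    (hb : ∀ i, 1 ≤ i → i + 1 ≤ n → a i * b i ≤ b (i + 1))
    (j k : ℕ) (hj1 : 1 ≤ j) (hj2 : j ≤ a n - 1)
    (hk : k ≤ (∏ i ∈ Finset.Icc 1 (n - 1), a i) - 1) :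
    (Ap (IndSG a b n) (k * a n + j)).ncard
      = (Ap (IndSG a b n) (k * a n + 1)).ncard + (j - 1) := by
  obtain ⟨m, rfl⟩ : ∃ m, n = m + 1 := ⟨n - 1, by omega⟩
  have hA : 2 ≤ a (m+1) := ha (m+1) (by omega) (by omega)
  have hprod : (∏ t ∈ Finset.Icc 1 m, a t) ≤ b (m+1) := by
    have := prod_le_b (m+1) a b hb1 hb (m+1) (by omega) (by omega)
    simpa using this
  have hprodpos : 1 ≤ ∏ t ∈ Finset.Icc 1 m, a t := by
    apply Finset.one_le_prod'
    intro i hi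
    simp only [Finset.mem_Icc] at hi
    have := ha i (by omega) (by omega)
    omega
  have hB : 1 ≤ b (m+1) := le_trans hprodpos hprod
  have hkb : k < b (m+1) := by
    simp only [Nat.add_sub_cancel] at hk
    omega
  have hup : ∀ t, b (m+1) ≤ t → t ∈ IndSG a b m := by
    intro t ht
    match m with
    | 0 => exact Set.mem_univ t
    | m' + 1 =>
      have h := hb (m'+1) (by omega) (by omega)
      exact Or.inr (by simpa using le_trans h ht)
  rw [ap_formula a b m j k hA hup hB hj1 hj2 hkb,
    ap_formula a b m 1 k hA hup hB (by omega) (by omega) hkb]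
  have e1 : (k+1)*(j-1) = k*(j-1) + (j-1) := by ring
  have e2 : k*(a (m+1)-1-j) + k*(j-1) = k*(a (m+1)-1-1) := by
    rw [← Nat.mul_add]; congr 1; omega
  omega
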